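/- For all n, m ≥ 1, the number M_{n,m} of minimal dominating sets of the n×m grid graph satisfies N_{n,m}(X^M)/2^{6(n+m)} ≤ M_{n,m} ≤ N_{n,m}(X^M), where N_{n,m}(X^M) is the number of n×m globally-admissible patterns of the minimal-domination subshift. -/

import Mathlib

/-- Grid adjacency on `ℤ²`. -/
def z2Adj (u v : ℤ × ℤ) : Prop :=
  |u.1 - v.1| + |u.2 - v.2| = 1

/-- Grid adjacency on the finite grid. -/
def gridAdj {n m : ℕ} (u v : Fin n × Fin m) : Prop :=
  |(u.1 : ℤ) - (v.1 : ℤ)| + |(u.2 : ℤ) - (v.2 : ℤ)| = 1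

/-- A dominating set of the infinite grid `ℤ²`. -/
def DomZ2 (S : Set (ℤ × ℤ)) : Prop :=
  ∀ v : ℤ × ℤ, v ∈ S ∨ ∃ u ∈ S, z2Adj u v

/-- A minimal dominating set of the infinite grid `ℤ²`. -/
def MinDomZ2 (S : Set (ℤ × ℤ)) : Prop :=
  DomZ2 S ∧ ∀ v ∈ S, ¬ DomZ2 (S \ {v})

/-- The minimal-domination subshift `X^M`. -/
def XM : Set (ℤ × ℤ → Bool) :=
  {x | MinDomZ2 {u | x u = true}}

/-- `N_{n,m}(X^M)`: the number of globally-admissible `n × m` patterns of `X^M`. -/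
noncomputable def NM (n m : ℕ) : ℕ :=
  Nat.card {p : Fin n × Fin m → Bool //
    ∃ x ∈ XM, ∀ ij : Fin n × Fin m, p ij = x (((ij.1 : ℤ) + 1), ((ij.2 : ℤ) + 1))}

/-- A dominating set of the `n × m` grid graph. -/
def DomGrid {n m : ℕ} (S : Set (Fin n × Fin m)) : Prop :=
  ∀ v : Fin n × Fin m, v ∈ S ∨ ∃ u ∈ S, gridAdj u v

/-- A minimal dominating set of the `n × m` grid graph. -/
def MinDomGrid {n m : ℕ} (S : Set (Fin n × Fin m)) : Prop :=
  DomGrid S ∧ ∀ v ∈ S, ¬ DomGrid (S \ {v})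

/-- `M_{n,m}`: the number of minimal dominating sets of the `n × m` grid graph. -/
noncomputable def Mnum (n m : ℕ) : ℕ :=
  Nat.card {S : Set (Fin n × Fin m) // MinDomGrid S}

/-- For all `n, m ≥ 1`,
`N_{n,m}(X^M) / 2^{6(n+m)} ≤ M_{n,m} ≤ N_{n,m}(X^M)`. -/

lemma z2Adj_iff (u v : ℤ × ℤ) : z2Adj u v ↔
    (u.1 = v.1 ∧ (u.2 = v.2 + 1 ∨ v.2 = u.2 + 1)) ∨
    (u.2 = v.2 ∧ (u.1 = v.1 + 1 ∨ v.1 = u.1 + 1)) := by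
  unfold z2Adj
  rcases abs_cases (u.1 - v.1) with ⟨h1, h1'⟩ | ⟨h1, h1'⟩ <;>
    rcases abs_cases (u.2 - v.2) with ⟨h2, h2'⟩ | ⟨h2, h2'⟩ <;> omega

lemma gridAdj_iff_z2 {n m : ℕ} (u v : Fin n × Fin m) :
    gridAdj u v ↔ z2Adj ((u.1 : ℤ) + 1, (u.2 : ℤ) + 1) ((v.1 : ℤ) + 1, (v.2 : ℤ) + 1) := by
  unfold gridAdj z2Adj
  simp only []
  ring_nf

/-- window embedding of `S`. -/

def winS (n m : ℕ) (S : Set (Fin n × Fin m)) : Set (ℤ × ℤ) :=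
  {v | ∃ ij ∈ S, v = ((ij.1 : ℤ) + 1, (ij.2 : ℤ) + 1)}

/-- horizontal full lines above and below the window. -/

def hpart (n : ℕ) : Set (ℤ × ℤ) :=
  {v | ((n : ℤ) + 2 ≤ v.1 ∧ (3 : ℤ) ∣ (v.1 - n - 2)) ∨ (v.1 ≤ -1 ∧ (3 : ℤ) ∣ (v.1 + 1))}

/-- vertical segments left and right of the window. -/

def vpart (n m : ℕ) : Set (ℤ × ℤ) :=
  {v | 1 ≤ v.1 ∧ v.1 ≤ (n : ℤ) ∧
    (((m : ℤ) + 2 ≤ v.2 ∧ (3 : ℤ) ∣ (v.2 - m - 2)) ∨ (v.2 ≤ -1 ∧ (3 : ℤ) ∣ (v.2 + 1)))}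

def ES (n m : ℕ) (S : Set (Fin n × Fin m)) : Set (ℤ × ℤ) :=
  winS n m S ∪ hpart n ∪ vpart n m

lemma winS_bounds {n m : ℕ} {S : Set (Fin n × Fin m)} {v : ℤ × ℤ} (h : v ∈ winS n m S) :
    1 ≤ v.1 ∧ v.1 ≤ (n : ℤ) ∧ 1 ≤ v.2 ∧ v.2 ≤ (m : ℤ) := by
  obtain ⟨ij, _, rfl⟩ := h
  have h1 : (ij.1 : ℤ) < n := by exact_mod_cast ij.1.isLt
  have h2 : (ij.2 : ℤ) < m := by exact_mod_cast ij.2.isLt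
  have h3 : (0 : ℤ) ≤ (ij.1 : ℤ) := Int.ofNat_nonneg _
  have h4 : (0 : ℤ) ≤ (ij.2 : ℤ) := Int.ofNat_nonneg _
  simp only []
  omega

lemma mem_winS_iff {n m : ℕ} {S : Set (Fin n × Fin m)} (ij : Fin n × Fin m) :
    ((ij.1 : ℤ) + 1, (ij.2 : ℤ) + 1) ∈ winS n m S ↔ ij ∈ S := by
  constructor
  · rintro ⟨kl, hkl, heq⟩
    have h1 : (kl.1 : ℤ) = ij.1 := by
      have := congrArg Prod.fst heq; simp at this; omega
    have h2 : (kl.2 : ℤ) = ij.2 := by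
      have := congrArg Prod.snd heq; simp at this; omega
    have : kl = ij := by
      apply Prod.ext
      · exact Fin.ext (by exact_mod_cast h1)
      · exact Fin.ext (by exact_mod_cast h2)
    exact this ▸ hkl
  · intro h; exact ⟨ij, h, rfl⟩

lemma dom_ES {n m : ℕ} (hn : 1 ≤ n) (hm : 1 ≤ m) {S : Set (Fin n × Fin m)}
    (hS : DomGrid S) : DomZ2 (ES n m S) := by
  rintro ⟨a, b⟩
  by_cases ha : 1 ≤ a ∧ a ≤ (n : ℤ)
  · by_cases hb : 1 ≤ b ∧ b ≤ (m : ℤ)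
    · -- inside the window; use grid domination
      have ha' : (a - 1).toNat < n := by omega
      have hb' : (b - 1).toNat < m := by omega
      set g : Fin n × Fin m := (⟨(a - 1).toNat, ha'⟩, ⟨(b - 1).toNat, hb'⟩) with hg
      have hga : ((g.1 : ℤ) + 1, (g.2 : ℤ) + 1) = (a, b) := by
        have e1 : ((a - 1).toNat : ℤ) = a - 1 := Int.toNat_of_nonneg (by omega)
        have e2 : ((b - 1).toNat : ℤ) = b - 1 := Int.toNat_of_nonneg (by omega)
        simp only [hg, Prod.ext_iff]
        constructor <;> simp <;> omega
      rcases hS g with hgS | ⟨u, huS, hadj⟩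
      · left
        exact Or.inl (Or.inl (hga ▸ ⟨g, hgS, rfl⟩))
      · right
        refine ⟨((u.1 : ℤ) + 1, (u.2 : ℤ) + 1), Or.inl (Or.inl ⟨u, huS, rfl⟩), ?_⟩
        have := (gridAdj_iff_z2 u g).1 hadj
        rwa [hga] at this
    · -- side strips: vertical segments
      rcases (by omega : (m : ℤ) + 1 ≤ b ∨ b ≤ 0) with hb' | hb'
      · have h3 : (b - m - 2) % 3 = 0 ∨ (b - m - 2) % 3 = 1 ∨ (b - m - 2) % 3 = 2 := by omega
        rcases h3 with h | h | h
        · exact Or.inl (Or.inr ⟨ha.1, ha.2, Or.inl ⟨by omega, by omega⟩⟩)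
        · refine Or.inr ⟨(a, b - 1), Or.inr ⟨ha.1, ha.2, Or.inl ⟨by omega, by omega⟩⟩, ?_⟩
          rw [z2Adj_iff]; simp
        · refine Or.inr ⟨(a, b + 1), Or.inr ⟨ha.1, ha.2, Or.inl ⟨by omega, by omega⟩⟩, ?_⟩
          rw [z2Adj_iff]; simp
      · have h3 : (b + 1) % 3 = 0 ∨ (b + 1) % 3 = 1 ∨ (b + 1) % 3 = 2 := by omega
        rcases h3 with h | h | h
        · exact Or.inl (Or.inr ⟨ha.1, ha.2, Or.inr ⟨by omega, by omega⟩⟩)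
        · refine Or.inr ⟨(a, b - 1), Or.inr ⟨ha.1, ha.2, Or.inr ⟨by omega, by omega⟩⟩, ?_⟩
          rw [z2Adj_iff]; simp
        · refine Or.inr ⟨(a, b + 1), Or.inr ⟨ha.1, ha.2, Or.inr ⟨by omega, by omega⟩⟩, ?_⟩
          rw [z2Adj_iff]; simp
  · -- top/bottom: horizontal lines
    rcases (by omega : (n : ℤ) + 1 ≤ a ∨ a ≤ 0) with ha' | ha'
    · have h3 : (a - n - 2) % 3 = 0 ∨ (a - n - 2) % 3 = 1 ∨ (a - n - 2) % 3 = 2 := by omega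
      rcases h3 with h | h | h
      · exact Or.inl (Or.inl (Or.inr (Or.inl ⟨by omega, by omega⟩)))
      · refine Or.inr ⟨(a - 1, b), Or.inl (Or.inr (Or.inl ⟨by omega, by omega⟩)), ?_⟩
        rw [z2Adj_iff]; simp
      · refine Or.inr ⟨(a + 1, b), Or.inl (Or.inr (Or.inl ⟨by omega, by omega⟩)), ?_⟩
        rw [z2Adj_iff]; simp
    · have h3 : (a + 1) % 3 = 0 ∨ (a + 1) % 3 = 1 ∨ (a + 1) % 3 = 2 := by omega
      rcases h3 with h | h | h
      · exact Or.inl (Or.inl (Or.inr (Or.inr ⟨by omega, by omega⟩)))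
      · refine Or.inr ⟨(a - 1, b), Or.inl (Or.inr (Or.inr ⟨by omega, by omega⟩)), ?_⟩
        rw [z2Adj_iff]; simp
      · refine Or.inr ⟨(a + 1, b), Or.inl (Or.inr (Or.inr ⟨by omega, by omega⟩)), ?_⟩
        rw [z2Adj_iff]; simp

lemma emb_inj {n m : ℕ} {ij kl : Fin n × Fin m}
    (h : ((ij.1 : ℤ) + 1, (ij.2 : ℤ) + 1) = ((kl.1 : ℤ) + 1, (kl.2 : ℤ) + 1)) : ij = kl := by
  have h1 := congrArg Prod.fst h
  have h2 := congrArg Prod.snd h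
  simp at h1 h2
  exact Prod.ext (Fin.ext (by exact_mod_cast h1)) (Fin.ext (by exact_mod_cast h2))

lemma ES_coords {n m : ℕ} {S : Set (Fin n × Fin m)} {c d : ℤ} (h : (c, d) ∈ ES n m S) :
    (1 ≤ c ∧ c ≤ (n : ℤ) ∧ 1 ≤ d ∧ d ≤ (m : ℤ)) ∨
    (((n : ℤ) + 2 ≤ c ∧ (3 : ℤ) ∣ (c - n - 2)) ∨ (c ≤ -1 ∧ (3 : ℤ) ∣ (c + 1))) ∨
    (1 ≤ c ∧ c ≤ (n : ℤ) ∧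
      (((m : ℤ) + 2 ≤ d ∧ (3 : ℤ) ∣ (d - m - 2)) ∨ (d ≤ -1 ∧ (3 : ℤ) ∣ (d + 1)))) := by
  rcases h with (hw | hH) | hV
  · exact Or.inl (winS_bounds hw)
  · exact Or.inr (Or.inl hH)
  · exact Or.inr (Or.inr hV)

lemma min_ES {n m : ℕ} (hn : 1 ≤ n) (hm : 1 ≤ m) {S : Set (Fin n × Fin m)}
    (hS : MinDomGrid S) : MinDomZ2 (ES n m S) := by
  refine ⟨dom_ES hn hm hS.1, ?_⟩
  rintro ⟨a, b⟩ hu hdom'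
  rcases hu with (hwin | hH) | hV
  · -- u is a window point coming from s ∈ S
    obtain ⟨s, hsS, heq⟩ := hwin
    obtain ⟨g, hg1, hg2⟩ : ∃ g, g ∉ S \ {s} ∧ ∀ t ∈ S \ {s}, ¬ gridAdj t g := by
      have h2 := hS.2 s hsS
      unfold DomGrid at h2
      push_neg at h2
      exact h2
    have hgn : ((g.1 : ℤ)) < n := by exact_mod_cast g.1.isLt
    have hgm : ((g.2 : ℤ)) < m := by exact_mod_cast g.2.isLt
    have hgn0 : (0 : ℤ) ≤ (g.1 : ℤ) := Int.ofNat_nonneg _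
    have hgm0 : (0 : ℤ) ≤ (g.2 : ℤ) := Int.ofNat_nonneg _
    rcases hdom' ((g.1 : ℤ) + 1, (g.2 : ℤ) + 1) with ⟨hq, hqne⟩ | ⟨q, ⟨hq, hqne⟩, hadj⟩
    · rcases hq with (hw | hH') | hV'
      · obtain ⟨g', hg'S, heq'⟩ := hw
        have hgg : g' = g := (emb_inj heq'.symm)
        rw [hgg] at hg'S
        have hgs : g = s := by
          by_contra hne
          exact hg1 ⟨hg'S, hne⟩
        apply hqne
        rw [Set.mem_singleton_iff, heq, hgs]
      · simp only [hpart, Set.mem_setOf_eq] at hH'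
        omega
      · simp only [vpart, Set.mem_setOf_eq] at hV'
        omega
    · rcases hq with (hw | hH') | hV'
      · obtain ⟨g', hg'S, heq'⟩ := hw
        rw [heq'] at hadj hqne
        have hadj' : gridAdj g' g := (gridAdj_iff_z2 g' g).2 hadj
        by_cases hgs : g' = s
        · exact hqne (by rw [Set.mem_singleton_iff, heq, hgs])
        · exact hg2 g' ⟨hg'S, hgs⟩ hadj'
      · obtain ⟨c, d⟩ := q
        simp only [hpart, Set.mem_setOf_eq] at hH'
        have hz := (z2Adj_iff _ _).1 hadj
        simp at hz
        omega
      · obtain ⟨c, d⟩ := q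
        simp only [vpart, Set.mem_setOf_eq] at hV'
        have hz := (z2Adj_iff _ _).1 hadj
        simp at hz
        omega
  · -- u on a horizontal line
    simp only [hpart, Set.mem_setOf_eq] at hH
    rcases hH with ⟨ha, hd⟩ | ⟨ha, hd⟩
    · -- top lines : private neighbor (a+1, b)
      rcases hdom' (a + 1, b) with ⟨hq, hqne⟩ | ⟨⟨c, d⟩, ⟨hq, hqne⟩, hadj⟩
      · have hco := ES_coords hq
        omega
      · have hco := ES_coords hq
        have hz := (z2Adj_iff _ _).1 hadj
        simp at hz
        have h9 : ¬(c = a ∧ d = b) := by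
          intro h; exact hqne (by simp [Set.mem_singleton_iff, Prod.ext_iff, h.1, h.2])
        omega
    · -- bottom lines : private neighbor (a-1, b)
      rcases hdom' (a - 1, b) with ⟨hq, hqne⟩ | ⟨⟨c, d⟩, ⟨hq, hqne⟩, hadj⟩
      · have hco := ES_coords hq
        omega
      · have hco := ES_coords hq
        have hz := (z2Adj_iff _ _).1 hadj
        simp at hz
        have h9 : ¬(c = a ∧ d = b) := by
          intro h; exact hqne (by simp [Set.mem_singleton_iff, Prod.ext_iff, h.1, h.2])
        omega
  · -- u on a vertical segment
    simp only [vpart, Set.mem_setOf_eq] at hV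
    obtain ⟨ha1, ha2, hV⟩ := hV
    rcases hV with ⟨hb, hd⟩ | ⟨hb, hd⟩
    · rcases hdom' (a, b + 1) with ⟨hq, hqne⟩ | ⟨⟨c, d⟩, ⟨hq, hqne⟩, hadj⟩
      · have hco := ES_coords hq
        omega
      · have hco := ES_coords hq
        have hz := (z2Adj_iff _ _).1 hadj
        simp at hz
        have h9 : ¬(c = a ∧ d = b) := by
          intro h; exact hqne (by simp [Set.mem_singleton_iff, Prod.ext_iff, h.1, h.2])
        omega
    · rcases hdom' (a, b - 1) with ⟨hq, hqne⟩ | ⟨⟨c, d⟩, ⟨hq, hqne⟩, hadj⟩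
      · have hco := ES_coords hq
        omega
      · have hco := ES_coords hq
        have hz := (z2Adj_iff _ _).1 hadj
        simp at hz
        have h9 : ¬(c = a ∧ d = b) := by
          intro h; exact hqne (by simp [Set.mem_singleton_iff, Prod.ext_iff, h.1, h.2])
        omega

lemma mem_ES_win_iff {n m : ℕ} {S : Set (Fin n × Fin m)} (ij : Fin n × Fin m) :
    ((ij.1 : ℤ) + 1, (ij.2 : ℤ) + 1) ∈ ES n m S ↔ ij ∈ S := by
  have h1 : (ij.1 : ℤ) < n := by exact_mod_cast ij.1.isLt
  have h2 : (ij.2 : ℤ) < m := by exact_mod_cast ij.2.isLt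
  have h3 : (0 : ℤ) ≤ (ij.1 : ℤ) := Int.ofNat_nonneg _
  have h4 : (0 : ℤ) ≤ (ij.2 : ℤ) := Int.ofNat_nonneg _
  constructor
  · rintro ((hw | hH) | hV)
    · exact (mem_winS_iff ij).1 hw
    · exfalso; simp only [hpart, Set.mem_setOf_eq] at hH; omega
    · exfalso; simp only [vpart, Set.mem_setOf_eq] at hV; omega
  · intro h; exact Or.inl (Or.inl ((mem_winS_iff ij).2 h))

lemma Mnum_le_NM (n m : ℕ) (hn : 1 ≤ n) (hm : 1 ≤ m) : Mnum n m ≤ NM n m := by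
  classical
  have key : ∀ S : {S : Set (Fin n × Fin m) // MinDomGrid S},
      (fun v => decide (v ∈ ES n m S.1)) ∈ XM := by
    intro S
    show MinDomZ2 {u | decide (u ∈ ES n m S.1) = true}
    have he : {u | decide (u ∈ ES n m S.1) = true} = ES n m S.1 := by
      ext u; simp
    rw [he]
    exact min_ES hn hm S.2
  apply Nat.card_le_card_of_injective
    (f := fun (S : {S : Set (Fin n × Fin m) // MinDomGrid S}) =>
      (⟨fun ij => decide (((ij.1 : ℤ) + 1, (ij.2 : ℤ) + 1) ∈ ES n m S.1),
        ⟨fun v => decide (v ∈ ES n m S.1), key S, fun ij => rfl⟩⟩ :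
        {p : Fin n × Fin m → Bool //
          ∃ x ∈ XM, ∀ ij : Fin n × Fin m, p ij = x (((ij.1 : ℤ) + 1), ((ij.2 : ℤ) + 1))}))
  intro S T h
  simp only [Subtype.mk.injEq] at h
  apply Subtype.ext
  ext ij
  have h2 := congrFun h ij
  simp only [decide_eq_decide, mem_ES_win_iff] at h2
  exact h2

lemma gridAdj_iff {n m : ℕ} (u v : Fin n × Fin m) : gridAdj u v ↔
    ((u.1 : ℤ) = (v.1 : ℤ) ∧ ((u.2 : ℤ) = (v.2 : ℤ) + 1 ∨ (v.2 : ℤ) = (u.2 : ℤ) + 1)) ∨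
    ((u.2 : ℤ) = (v.2 : ℤ) ∧ ((u.1 : ℤ) = (v.1 : ℤ) + 1 ∨ (v.1 : ℤ) = (u.1 : ℤ) + 1)) := by
  unfold gridAdj
  rcases abs_cases ((u.1 : ℤ) - (v.1 : ℤ)) with ⟨h1, h1'⟩ | ⟨h1, h1'⟩ <;>
    rcases abs_cases ((u.2 : ℤ) - (v.2 : ℤ)) with ⟨h2, h2'⟩ | ⟨h2, h2'⟩ <;> omega

lemma shrink_aux {n m : ℕ} : ∀ (N : ℕ) (A K : Set (Fin n × Fin m)), A.ncard ≤ N →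
    DomGrid A → K ⊆ A →
    (∀ s ∈ K, ∃ w, (s = w ∨ gridAdj s w) ∧ ∀ t ∈ A, (t = w ∨ gridAdj t w) → t = s) →
    ∃ D, MinDomGrid D ∧ K ⊆ D ∧ D ⊆ A := by
  intro N
  induction N with
  | zero =>
    intro A K hcard hdom hK _
    have hA : A = ∅ := (Set.ncard_eq_zero (Set.toFinite A)).1 (by omega)
    subst hA
    refine ⟨∅, ⟨hdom, fun v hv => absurd hv (Set.notMem_empty v)⟩, hK, le_refl _⟩
  | succ N ih =>
    intro A K hcard hdom hK hpriv
    by_cases h : ∃ v ∈ A, v ∉ K ∧ DomGrid (A \ {v})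
    · obtain ⟨v, hvA, hvK, hdom'⟩ := h
      have hc : (A \ {v}).ncard ≤ N := by
        have h1 : (A \ {v}).ncard = A.ncard - 1 := Set.ncard_diff_singleton_of_mem hvA
        have h2 : 1 ≤ A.ncard := (Set.ncard_pos (Set.toFinite A)).2 ⟨v, hvA⟩
        omega
      obtain ⟨D, hD, hKD, hDA⟩ := ih (A \ {v}) K hc hdom'
        (fun s hs => ⟨hK hs, fun hsv => hvK (hsv ▸ hs)⟩)
        (fun s hs => by
          obtain ⟨w, hw1, hw2⟩ := hpriv s hs
          exact ⟨w, hw1, fun t ht h2 => hw2 t ht.1 h2⟩)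
      exact ⟨D, hD, hKD, fun x hx => (hDA hx).1⟩
    · push_neg at h
      refine ⟨A, ⟨hdom, ?_⟩, hK, le_refl _⟩
      intro v hvA hdom'
      by_cases hvK : v ∈ K
      · obtain ⟨w, hw1, hw2⟩ := hpriv v hvK
        rcases hdom' w with hw | ⟨u, hu, hadj⟩
        · exact hw.2 (hw2 w hw.1 (Or.inl rfl))
        · exact hu.2 (hw2 u hu.1 (Or.inr hadj))
      · exact h v hvA hvK hdom'

lemma shrink {n m : ℕ} (A K : Set (Fin n × Fin m))
    (hdom : DomGrid A) (hK : K ⊆ A)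
    (hpriv : ∀ s ∈ K, ∃ w, (s = w ∨ gridAdj s w) ∧ ∀ t ∈ A, (t = w ∨ gridAdj t w) → t = s) :
    ∃ D, MinDomGrid D ∧ K ⊆ D ∧ D ⊆ A :=
  shrink_aux A.ncard A K le_rfl hdom hK hpriv

lemma exists_D (n m : ℕ) (x : ℤ × ℤ → Bool) (hx : x ∈ XM) :
    ∃ D : Set (Fin n × Fin m), MinDomGrid D ∧
      ∀ ij : Fin n × Fin m, 3 ≤ ij.1.val → ij.1.val + 4 ≤ n → 3 ≤ ij.2.val → ij.2.val + 4 ≤ m →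
        (ij ∈ D ↔ x ((ij.1 : ℤ) + 1, (ij.2 : ℤ) + 1) = true) := by
  have hx' : MinDomZ2 {u | x u = true} := hx
  set X : Set (ℤ × ℤ) := {u | x u = true} with hX
  set S : Set (Fin n × Fin m) := {ij | x ((ij.1 : ℤ) + 1, (ij.2 : ℤ) + 1) = true} with hSdef
  set L : Set (Fin n × Fin m) :=
    {ij | ij.1.val = 0 ∨ ij.1.val + 1 = n ∨ ij.2.val = 0 ∨ ij.2.val + 1 = m} with hLdef
  set A : Set (Fin n × Fin m) :=
    {ij | ij ∈ S ∧ 1 ≤ ij.1.val ∧ ij.1.val + 2 ≤ n ∧ 1 ≤ ij.2.val ∧ ij.2.val + 2 ≤ m} ∪ L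
    with hAdef
  set K : Set (Fin n × Fin m) :=
    {ij | ij ∈ S ∧ 3 ≤ ij.1.val ∧ ij.1.val + 4 ≤ n ∧ 3 ≤ ij.2.val ∧ ij.2.val + 4 ≤ m}
    with hKdef
  have hdom : DomGrid A := by
    rintro ⟨i, j⟩
    have hcase : (i.val = 0 ∨ i.val + 1 = n ∨ j.val = 0 ∨ j.val + 1 = m) ∨
        ((i.val = 1 ∨ i.val + 2 = n ∨ j.val = 1 ∨ j.val + 2 = m) ∧
          1 ≤ i.val ∧ i.val + 2 ≤ n ∧ 1 ≤ j.val ∧ j.val + 2 ≤ m) ∨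
        (2 ≤ i.val ∧ i.val + 3 ≤ n ∧ 2 ≤ j.val ∧ j.val + 3 ≤ m) := by omega
    rcases hcase with h | ⟨h, hb⟩ | h
    · exact Or.inl (Or.inr h)
    · -- one step from the border: dominated by L
      rcases h with h | h | h | h
      · refine Or.inr ⟨(⟨0, by omega⟩, j), Or.inr (Or.inl rfl), ?_⟩
        rw [gridAdj_iff]; simp; omega
      · refine Or.inr ⟨(⟨n - 1, by omega⟩, j), Or.inr (Or.inr (Or.inl (show n - 1 + 1 = n by omega))), ?_⟩
        rw [gridAdj_iff]; simp; omega
      · refine Or.inr ⟨(i, ⟨0, by omega⟩), Or.inr (Or.inr (Or.inr (Or.inl rfl))), ?_⟩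
        rw [gridAdj_iff]; simp; omega
      · refine Or.inr ⟨(i, ⟨m - 1, by omega⟩), Or.inr (Or.inr (Or.inr (Or.inr (show m - 1 + 1 = m by omega)))), ?_⟩
        rw [gridAdj_iff]; simp; omega
    · -- interior: use domination of x
      obtain ⟨h1, h2, h3, h4⟩ := h
      have hi : ((i : ℤ)) = (i.val : ℤ) := rfl
      have hj : ((j : ℤ)) = (j.val : ℤ) := rfl
      rcases hx'.1 ((i : ℤ) + 1, (j : ℤ) + 1) with hv | ⟨⟨a, b⟩, huX, hadj⟩
      · refine Or.inl (Or.inl ?_)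
        refine ⟨hv, ?_, ?_, ?_, ?_⟩ <;> simp <;> omega
      · have hz := (z2Adj_iff _ _).1 hadj
        simp at hz
        have ha1 : (1 : ℤ) ≤ a - 1 := by omega
        have ha2 : a - 1 + 2 ≤ (n : ℤ) := by omega
        have hb1 : (1 : ℤ) ≤ b - 1 := by omega
        have hb2 : b - 1 + 2 ≤ (m : ℤ) := by omega
        have han : (a - 1).toNat < n := by omega
        have hbm : (b - 1).toNat < m := by omega
        set u : Fin n × Fin m := (⟨(a - 1).toNat, han⟩, ⟨(b - 1).toNat, hbm⟩) with hu
        have himg : ((u.1 : ℤ) + 1, (u.2 : ℤ) + 1) = (a, b) := by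
          simp only [hu, Prod.ext_iff]
          constructor <;> simp <;> omega
        refine Or.inr ⟨u, Or.inl ⟨?_, by simp [hu]; omega, by simp [hu]; omega,
          by simp [hu]; omega, by simp [hu]; omega⟩, ?_⟩
        · show x ((u.1 : ℤ) + 1, (u.2 : ℤ) + 1) = true
          rw [himg]; exact huX
        · rw [gridAdj_iff_z2, himg]
          exact hadj
  have hKA : K ⊆ A := by
    rintro ij ⟨h0, h1, h2, h3, h4⟩
    exact Or.inl ⟨h0, by omega, by omega, by omega, by omega⟩
  have hpriv : ∀ s ∈ K, ∃ w, (s = w ∨ gridAdj s w) ∧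
      ∀ t ∈ A, (t = w ∨ gridAdj t w) → t = s := by
    rintro ⟨i, j⟩ ⟨hsS', h1', h2', h3', h4'⟩
    have hsS : x ((i : ℤ) + 1, (j : ℤ) + 1) = true := hsS'
    have h1 : 3 ≤ i.val := h1'
    have h2 : i.val + 4 ≤ n := h2'
    have h3 : 3 ≤ j.val := h3'
    have h4 : m ≥ j.val + 4 := h4'
    have hi : ((i : ℤ)) = (i.val : ℤ) := rfl
    have hj : ((j : ℤ)) = (j.val : ℤ) := rfl
    have hσ : ((i : ℤ) + 1, (j : ℤ) + 1) ∈ X := hsS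
    obtain ⟨w', hw1, hw2⟩ : ∃ w', w' ∉ X \ {((i : ℤ) + 1, (j : ℤ) + 1)} ∧
        ∀ t ∈ X \ {((i : ℤ) + 1, (j : ℤ) + 1)}, ¬ z2Adj t w' := by
      have h5 := hx'.2 _ hσ
      unfold DomZ2 at h5
      push_neg at h5
      exact h5
    obtain ⟨a, b⟩ := w'
    have hrel : ((i : ℤ) + 1, (j : ℤ) + 1) = ((a : ℤ), (b : ℤ)) ∨
        z2Adj ((i : ℤ) + 1, (j : ℤ) + 1) (a, b) := by
      rcases hx'.1 (a, b) with h | ⟨t, htX, hadj⟩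
      · left
        by_contra hne
        exact hw1 ⟨h, fun hc => hne (by rw [Set.mem_singleton_iff] at hc; rw [hc])⟩
      · by_cases ht : t = ((i : ℤ) + 1, (j : ℤ) + 1)
        · right; rw [← ht]; exact hadj
        · exact absurd hadj (hw2 t ⟨htX, ht⟩)
    have hbound : (i.val : ℤ) - 1 ≤ a - 1 ∧ a - 1 ≤ i.val + 1 ∧ (j.val : ℤ) - 1 ≤ b - 1 ∧
        b - 1 ≤ j.val + 1 := by
      rcases hrel with h | h
      · have e1 := congrArg Prod.fst h
        have e2 := congrArg Prod.snd h
        simp at e1 e2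
        omega
      · have hz := (z2Adj_iff _ _).1 h
        simp at hz
        omega
    have han : (a - 1).toNat < n := by omega
    have hbm : (b - 1).toNat < m := by omega
    set w : Fin n × Fin m := (⟨(a - 1).toNat, han⟩, ⟨(b - 1).toNat, hbm⟩) with hw
    have himg : ((w.1 : ℤ) + 1, (w.2 : ℤ) + 1) = (a, b) := by
      simp only [hw, Prod.ext_iff]
      constructor <;> simp <;> omega
    refine ⟨w, ?_, ?_⟩
    · rcases hrel with h | h
      · left
        have e1 := congrArg Prod.fst h
        have e2 := congrArg Prod.snd h
        simp at e1 e2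
        apply Prod.ext <;> apply Fin.ext <;> simp [hw] <;> omega
      · right
        rw [gridAdj_iff_z2, himg]
        exact h
    · rintro t htA hrel_t
      have himg_t : t = w ∨ gridAdj t w →
          (((t.1 : ℤ) + 1, (t.2 : ℤ) + 1) = ((a : ℤ), b) ∨
            z2Adj ((t.1 : ℤ) + 1, (t.2 : ℤ) + 1) (a, b)) := by
        rintro (rfl | h)
        · left; exact himg
        · right; rw [← himg]; exact (gridAdj_iff_z2 t w).1 h
      rcases htA with ⟨htS, hb1, hb2, hb3, hb4⟩ | htL
      · -- t in the inner part of A : use privateness w.r.t. X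
        have htX : ((t.1 : ℤ) + 1, (t.2 : ℤ) + 1) ∈ X := htS
        have key : ((t.1 : ℤ) + 1, (t.2 : ℤ) + 1) = ((i : ℤ) + 1, (j : ℤ) + 1) := by
          rcases himg_t hrel_t with h | h
          · rw [h] at htX
            have hab : ((a : ℤ), (b : ℤ)) = ((i : ℤ) + 1, (j : ℤ) + 1) := by
              by_contra hne
              exact hw1 ⟨htX, fun hc => hne (by rwa [Set.mem_singleton_iff] at hc)⟩
            rw [h, hab]
          · by_cases hne : ((t.1 : ℤ) + 1, (t.2 : ℤ) + 1) = ((i : ℤ) + 1, (j : ℤ) + 1)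
            · exact hne
            · exact absurd h (hw2 _ ⟨htX, fun hc => hne (by rwa [Set.mem_singleton_iff] at hc)⟩)
        exact emb_inj key
      · -- t on the border : impossible, w is deep inside
        exfalso
        have hrel_t' : ((t.1 : ℤ) = (w.1 : ℤ) ∧ (t.2 : ℤ) = (w.2 : ℤ)) ∨
            ((t.1 : ℤ) = (w.1 : ℤ) ∧ ((t.2 : ℤ) = (w.2 : ℤ) + 1 ∨ (w.2 : ℤ) = (t.2 : ℤ) + 1)) ∨
            ((t.2 : ℤ) = (w.2 : ℤ) ∧ ((t.1 : ℤ) = (w.1 : ℤ) + 1 ∨ (w.1 : ℤ) = (t.1 : ℤ) + 1)) := by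
          rcases hrel_t with rfl | h
          · exact Or.inl ⟨rfl, rfl⟩
          · rcases (gridAdj_iff t w).1 h with h | h
            · exact Or.inr (Or.inl h)
            · exact Or.inr (Or.inr h)
        have hwv1 : ((w.1 : ℤ)) = a - 1 := by simp [hw]; omega
        have hwv2 : ((w.2 : ℤ)) = b - 1 := by simp [hw]; omega
        have ht1 : ((t.1 : ℤ)) = (t.1.val : ℤ) := rfl
        have ht2 : ((t.2 : ℤ)) = (t.2.val : ℤ) := rfl
        have htn : t.1.val < n := t.1.isLt
        have htm : t.2.val < m := t.2.isLt
        rcases htL with h | h | h | h <;> omega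
  obtain ⟨D, hD, hKD, hDA⟩ := shrink A K hdom hKA hpriv
  refine ⟨D, hD, ?_⟩
  intro ij g1 g2 g3 g4
  constructor
  · intro hij
    rcases hDA hij with ⟨h, _⟩ | hL
    · exact h
    · exfalso
      rcases hL with h | h | h | h <;> omega
  · intro hij
    exact hKD ⟨hij, g1, g2, g3, g4⟩

lemma Mnum_pos (n m : ℕ) : 1 ≤ Mnum n m := by
  obtain ⟨D, hD, -, -⟩ := shrink (n := n) (m := m) Set.univ ∅
    (fun v => Or.inl (Set.mem_univ v)) (Set.empty_subset _)
    (fun s hs => absurd hs (Set.notMem_empty s))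
  have : Nonempty {S : Set (Fin n × Fin m) // MinDomGrid S} := ⟨⟨D, hD⟩⟩
  exact Nat.one_le_iff_ne_zero.2 (Nat.card_ne_zero.2 ⟨this, inferInstance⟩)

lemma NM_le_pow (n m : ℕ) : NM n m ≤ 2 ^ (n * m) := by
  have h := Nat.card_le_card_of_injective
    (f := fun (p : {p : Fin n × Fin m → Bool //
      ∃ x ∈ XM, ∀ ij : Fin n × Fin m, p ij = x (((ij.1 : ℤ) + 1), ((ij.2 : ℤ) + 1))}) => p.val)
    Subtype.val_injective
  calc NM n m ≤ Nat.card (Fin n × Fin m → Bool) := h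
    _ = 2 ^ (n * m) := by
        simp [Nat.card_eq_fintype_card, Fintype.card_fun]

lemma NM_le_main (n m : ℕ) (hn : 6 ≤ n) (hm : 6 ≤ m) :
    NM n m ≤ 2 ^ (6 * (n + m)) * Mnum n m := by
  classical
  have hDex : ∀ p : {p : Fin n × Fin m → Bool //
    ∃ x ∈ XM, ∀ ij : Fin n × Fin m, p ij = x (((ij.1 : ℤ) + 1), ((ij.2 : ℤ) + 1))}, ∃ D : Set (Fin n × Fin m), MinDomGrid D ∧
      ∀ ij : Fin n × Fin m, 3 ≤ ij.1.val → ij.1.val + 4 ≤ n → 3 ≤ ij.2.val → ij.2.val + 4 ≤ m →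
        (ij ∈ D ↔ p.1 ij = true) := by
    intro p
    obtain ⟨x, hx, hp⟩ := p.2
    obtain ⟨D, hD, hrec⟩ := exists_D n m x hx
    exact ⟨D, hD, fun ij a b c d => by rw [hp ij]; exact hrec ij a b c d⟩
  set rIdx : Fin 6 → Fin n := fun k =>
    if h : k.val < 3 then ⟨k.val, by omega⟩ else ⟨n - 6 + k.val, by omega⟩ with hrIdx
  set cIdx : Fin 6 → Fin m := fun k =>
    if h : k.val < 3 then ⟨k.val, by omega⟩ else ⟨m - 6 + k.val, by omega⟩ with hcIdx
  set Φ : {p : Fin n × Fin m → Bool //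
    ∃ x ∈ XM, ∀ ij : Fin n × Fin m, p ij = x (((ij.1 : ℤ) + 1), ((ij.2 : ℤ) + 1))} → (Fin 6 × Fin m → Bool) × (Fin n × Fin 6 → Bool) ×
      {S : Set (Fin n × Fin m) // MinDomGrid S} :=
    fun p => (fun kj => p.1 (rIdx kj.1, kj.2), fun ik => p.1 (ik.1, cIdx ik.2),
      ⟨(hDex p).choose, (hDex p).choose_spec.1⟩) with hΦ
  have hinj : Function.Injective Φ := by
    intro p q h
    have h1 := congrArg Prod.fst h
    have h2 := congrArg (fun t => t.2.1) h
    have h3 : (hDex p).choose = (hDex q).choose := by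
      have := congrArg (fun t => t.2.2.val) h
      simpa [hΦ] using this
    apply Subtype.ext
    funext ij
    obtain ⟨i, j⟩ := ij
    rcases (by omega : i.val < 3 ∨ n - 3 ≤ i.val ∨ (3 ≤ i.val ∧ i.val + 4 ≤ n)) with hi | hi | hi
    · have := congrFun h1 (⟨i.val, by omega⟩, j)
      simp only [hΦ, hrIdx] at this
      rw [dif_pos (by simpa using hi)] at this
      simpa [Fin.ext_iff] using this
    · have := congrFun h1 (⟨i.val - (n - 6), by omega⟩, j)
      simp only [hΦ, hrIdx] at this
      rw [dif_neg (by simp; omega)] at this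
      have he : (⟨n - 6 + (i.val - (n - 6)), by omega⟩ : Fin n) = i := by
        apply Fin.ext; simp; omega
      rw [he] at this
      exact this
    · rcases (by omega : j.val < 3 ∨ m - 3 ≤ j.val ∨ (3 ≤ j.val ∧ j.val + 4 ≤ m))
        with hj | hj | hj
      · have := congrFun h2 (i, ⟨j.val, by omega⟩)
        simp only [hΦ, hcIdx] at this
        rw [dif_pos (by simpa using hj)] at this
        simpa [Fin.ext_iff] using this
      · have := congrFun h2 (i, ⟨j.val - (m - 6), by omega⟩)
        simp only [hΦ, hcIdx] at this
        rw [dif_neg (by simp; omega)] at this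
        have he : (⟨m - 6 + (j.val - (m - 6)), by omega⟩ : Fin m) = j := by
          apply Fin.ext; simp; omega
        rw [he] at this
        exact this
      · have hp := (hDex p).choose_spec.2 (i, j) hi.1 hi.2 hj.1 hj.2
        have hq := (hDex q).choose_spec.2 (i, j) hi.1 hi.2 hj.1 hj.2
        rw [h3] at hp
        have hiq : p.1 (i, j) = true ↔ q.1 (i, j) = true := by
          rw [← hp, ← hq]
        exact Bool.coe_iff_coe.mp hiq
  have hcard := Nat.card_le_card_of_injective Φ hinj
  calc NM n m ≤ Nat.card ((Fin 6 × Fin m → Bool) × (Fin n × Fin 6 → Bool) ×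
      {S : Set (Fin n × Fin m) // MinDomGrid S}) := hcard
    _ = 2 ^ (6 * m) * (2 ^ (n * 6) * Mnum n m) := by
        rw [Nat.card_prod, Nat.card_prod]
        congr 1
        · simp [Nat.card_eq_fintype_card, Fintype.card_fun]
        congr 1
        · simp [Nat.card_eq_fintype_card, Fintype.card_fun]
    _ = 2 ^ (6 * (n + m)) * Mnum n m := by
        rw [← mul_assoc, ← pow_add]
        congr 2
        ring

theorem minimal_domination_count_bounds (n m : ℕ) (hn : 1 ≤ n) (hm : 1 ≤ m) :
    NM n m ≤ 2 ^ (6 * (n + m)) * Mnum n m ∧ Mnum n m ≤ NM n m := by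
  refine ⟨?_, Mnum_le_NM n m hn hm⟩
  by_cases h : 6 ≤ n ∧ 6 ≤ m
  · exact NM_le_main n m h.1 h.2
  · have hsmall : n * m ≤ 6 * (n + m) := by
      rcases (by omega : n ≤ 5 ∨ m ≤ 5) with h5 | h5
      · calc n * m ≤ 5 * m := Nat.mul_le_mul_right m h5
          _ ≤ 6 * (n + m) := by omega
      · calc n * m ≤ n * 5 := Nat.mul_le_mul_left n h5
          _ ≤ 6 * (n + m) := by omega
    calc NM n m ≤ 2 ^ (n * m) := NM_le_pow n m
      _ ≤ 2 ^ (6 * (n + m)) := Nat.pow_le_pow_right (by norm_num) hsmall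
      _ = 2 ^ (6 * (n + m)) * 1 := by ring
      _ ≤ 2 ^ (6 * (n + m)) * Mnum n m := Nat.mul_le_mul_left _ (Mnum_pos n m)
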